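/- Let M be a graded R-module. The collection β = { GX_r^{qp.M} : r ∈ h(R) } of basic open sets forms a base for the quasi-Zariski topology on qp.Spec_g(M). -/

import Mathlib

section ModuleDefs

variable {G R M : Type*} [AddGroup G] [DecidableEq G] [CommRing R]
  [AddCommGroup M] [Module R M]
  (𝒜 : G → AddSubgroup R) [GradedRing 𝒜]
  (ℳ : G → AddSubgroup M) [DirectSum.Decomposition ℳ] [SetLike.GradedSMul 𝒜 ℳ]

def gradedRadical (I : Ideal R) : Set R :=
  {r : R | ∀ g : G, ∃ n : ℕ, 0 < n ∧ (DirectSum.decompose 𝒜 r g : R) ^ n ∈ I}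

/-- A graded submodule: contains the homogeneous components of all its elements. -/
def IsGradedSubmodule (N : Submodule R M) : Prop :=
  ∀ (g : G) ⦃m : M⦄, m ∈ N → (DirectSum.decompose ℳ m g : M) ∈ N

def IsGradedPrimeIdeal (P : Ideal R) : Prop :=
  P ≠ ⊤ ∧ (∀ (g : G) ⦃r : R⦄, r ∈ P → (DirectSum.decompose 𝒜 r g : R) ∈ P) ∧
    ∀ ⦃r s : R⦄, SetLike.IsHomogeneousElem 𝒜 r → SetLike.IsHomogeneousElem 𝒜 s →
      r * s ∈ P → r ∈ P ∨ s ∈ P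

/-- A graded prime submodule `P`: proper graded, and `r • m ∈ P` for homogeneous `r, m`
implies `m ∈ P` or `r ∈ (P :_R M)`. -/
def IsGradedPrimeSubmodule (P : Submodule R M) : Prop :=
  P ≠ ⊤ ∧ IsGradedSubmodule ℳ P ∧
    ∀ ⦃r : R⦄ ⦃m : M⦄, SetLike.IsHomogeneousElem 𝒜 r → SetLike.IsHomogeneousElem ℳ m →
      r • m ∈ P → m ∈ P ∨ r ∈ P.colon ⊤

/-- The graded radical `Gr_M(Q)` of a submodule: the intersection of all graded prime
submodules containing `Q` (equal to `M` if there are none). -/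
def gradedRadicalSubmodule (Q : Submodule R M) : Submodule R M :=
  sInf {P : Submodule R M | IsGradedPrimeSubmodule 𝒜 ℳ P ∧ Q ≤ P}

/-- A graded quasi-primary submodule `Q`: proper graded, and `r • m ∈ Q` for homogeneous
`r, m` implies `r ∈ Gr((Q :_R M))` or `m ∈ Gr_M(Q)`. -/
def IsGradedQuasiPrimarySubmodule (Q : Submodule R M) : Prop :=
  Q ≠ ⊤ ∧ IsGradedSubmodule ℳ Q ∧
    ∀ ⦃r : R⦄ ⦃m : M⦄, SetLike.IsHomogeneousElem 𝒜 r → SetLike.IsHomogeneousElem ℳ m →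
      r • m ∈ Q → r ∈ gradedRadical 𝒜 (Q.colon ⊤) ∨ m ∈ gradedRadicalSubmodule 𝒜 ℳ Q

/-- `K` satisfies the graded primeful property if every graded prime ideal containing
`(K :_R M)` is of the form `(P :_R M)` for a graded prime submodule `P ⊇ K`. -/
def SatisfiesGradedPrimeful (K : Submodule R M) : Prop :=
  ∀ p : Ideal R, IsGradedPrimeIdeal 𝒜 p → K.colon ⊤ ≤ p →
    ∃ P : Submodule R M, IsGradedPrimeSubmodule 𝒜 ℳ P ∧ K ≤ P ∧ P.colon ⊤ = p

/-- The graded quasi-primary spectrum of `M`: the graded quasi-primary submodules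
satisfying the graded primeful property. -/
def qpSpec : Set (Submodule R M) :=
  {Q : Submodule R M | IsGradedQuasiPrimarySubmodule 𝒜 ℳ Q ∧ SatisfiesGradedPrimeful 𝒜 ℳ Q}

/-- The variety `qp-V^g_M(K) = { Q ∈ qp.Spec_g(M) : Gr((Q:_R M)) ⊇ Gr((K:_R M)) }`. -/
def qpV (K : Submodule R M) : Set (qpSpec 𝒜 ℳ) :=
  {Q : qpSpec 𝒜 ℳ | gradedRadical 𝒜 (K.colon ⊤) ⊆ gradedRadical 𝒜 (Q.1.colon ⊤)}

/-- The quasi-Zariski topology on `qp.Spec_g(M)`, generated by the complements of the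
varieties of graded submodules. -/
def qpZariski : TopologicalSpace (qpSpec 𝒜 ℳ) :=
  TopologicalSpace.generateFrom
    {U : Set (qpSpec 𝒜 ℳ) | ∃ K : Submodule R M, IsGradedSubmodule ℳ K ∧ U = (qpV 𝒜 ℳ K)ᶜ}
/-- Decomposition of `a • m` for `m` homogeneous. -/
lemma aux_decompose_smul_homog {m : M} {h : G} (hm : m ∈ ℳ h) (a : R) (g : G) :
    (DirectSum.decompose ℳ (a • m) (g + h) : M) = (DirectSum.decompose 𝒜 a g : R) • m := by
  refine DirectSum.Decomposition.inductionOn 𝒜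
    (motive := fun a => ∀ g : G, (DirectSum.decompose ℳ (a • m) (g + h) : M)
      = (DirectSum.decompose 𝒜 a g : R) • m) ?_ ?_ ?_ a g
  · intro g; simp
  · intro i a' g
    have hsm : (a' : R) • m ∈ ℳ (i + h) := SetLike.GradedSMul.smul_mem a'.2 hm
    by_cases hg : g = i
    · subst hg
      rw [DirectSum.decompose_of_mem_same ℳ hsm, DirectSum.decompose_of_mem_same 𝒜 a'.2]
    · rw [DirectSum.decompose_of_mem_ne ℳ hsm (fun he => hg (by
        have := add_right_cancel he; exact this.symm)),
        DirectSum.decompose_of_mem_ne 𝒜 a'.2 (Ne.symm hg), zero_smul]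
  · intro x y hx hy g
    rw [add_smul, DirectSum.decompose_add, DirectSum.decompose_add]
    simp only [DirectSum.add_apply, AddSubgroup.coe_add, add_smul]
    rw [hx g, hy g]

/-- Decomposition of `r • m` for `r` homogeneous. -/
lemma aux_decompose_smul_homog_left {r : R} {d : G} (hr : r ∈ 𝒜 d) (m : M) (g : G) :
    (DirectSum.decompose ℳ (r • m) (d + g) : M) = r • (DirectSum.decompose ℳ m g : M) := by
  refine DirectSum.Decomposition.inductionOn ℳ
    (motive := fun m => ∀ g : G, (DirectSum.decompose ℳ (r • m) (d + g) : M)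
      = r • (DirectSum.decompose ℳ m g : M)) ?_ ?_ ?_ m g
  · intro g; simp
  · intro j m' g
    have hsm : r • (m' : M) ∈ ℳ (d + j) := SetLike.GradedSMul.smul_mem hr m'.2
    by_cases hg : g = j
    · subst hg
      rw [DirectSum.decompose_of_mem_same ℳ hsm, DirectSum.decompose_of_mem_same ℳ m'.2]
    · rw [DirectSum.decompose_of_mem_ne ℳ hsm (fun he => hg (add_left_cancel he).symm),
        DirectSum.decompose_of_mem_ne ℳ m'.2 (Ne.symm hg), smul_zero]
  · intro x y hx hy g
    rw [smul_add, DirectSum.decompose_add]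
    simp only [DirectSum.add_apply, AddSubgroup.coe_add]
    rw [hx g, hy g, DirectSum.decompose_add]
    simp [smul_add]

/-- Decomposition of `c * r` for `r` homogeneous. -/
lemma aux_decompose_mul_homog {r : R} {d : G} (hr : r ∈ 𝒜 d) (c : R) (g : G) :
    (DirectSum.decompose 𝒜 (c * r) (g + d) : R) = (DirectSum.decompose 𝒜 c g : R) * r := by
  refine DirectSum.Decomposition.inductionOn 𝒜
    (motive := fun c => ∀ g : G, (DirectSum.decompose 𝒜 (c * r) (g + d) : R)
      = (DirectSum.decompose 𝒜 c g : R) * r) ?_ ?_ ?_ c g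
  · intro g; simp
  · intro i c' g
    have hsm : (c' : R) * r ∈ 𝒜 (i + d) := SetLike.mul_mem_graded c'.2 hr
    by_cases hg : g = i
    · subst hg
      rw [DirectSum.decompose_of_mem_same 𝒜 hsm, DirectSum.decompose_of_mem_same 𝒜 c'.2]
    · rw [DirectSum.decompose_of_mem_ne 𝒜 hsm (fun he => hg (add_right_cancel he).symm),
        DirectSum.decompose_of_mem_ne 𝒜 c'.2 (Ne.symm hg), zero_mul]
  · intro x y hx hy g
    rw [add_mul, DirectSum.decompose_add, DirectSum.decompose_add]
    simp only [DirectSum.add_apply, AddSubgroup.coe_add, add_mul]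
    rw [hx g, hy g]

lemma aux_hom_mem_gradedRadical {r : R} {i : G} (hi : r ∈ 𝒜 i) {I : Ideal R} {n : ℕ}
    (hn : 0 < n) (h : r ^ n ∈ I) : r ∈ gradedRadical 𝒜 I := by
  intro g
  by_cases hg : g = i
  · subst hg; rw [DirectSum.decompose_of_mem_same 𝒜 hi]; exact ⟨n, hn, h⟩
  · rw [DirectSum.decompose_of_mem_ne 𝒜 hi (Ne.symm hg)]
    exact ⟨1, one_pos, by simpa using I.zero_mem⟩

lemma aux_exists_pow_of_hom_mem {r : R} {i : G} (hi : r ∈ 𝒜 i) {I : Ideal R}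
    (h : r ∈ gradedRadical 𝒜 I) : ∃ n, 0 < n ∧ r ^ n ∈ I := by
  obtain ⟨n, hn, hmem⟩ := h i
  rw [DirectSum.decompose_of_mem_same 𝒜 hi] at hmem
  exact ⟨n, hn, hmem⟩



lemma aux_span_smul_graded {r : R} (hr : SetLike.IsHomogeneousElem 𝒜 r) :
    IsGradedSubmodule ℳ (Ideal.span {r} • (⊤ : Submodule R M)) := by
  obtain ⟨d, hd⟩ := hr
  intro g x hx
  rw [Submodule.ideal_span_singleton_smul] at hx ⊢
  obtain ⟨m, -, rfl⟩ : ∃ m ∈ (⊤ : Submodule R M), r • m = x := by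
    rw [← SetLike.mem_coe, Submodule.coe_pointwise_smul] at hx
    simpa [Set.mem_smul_set] using hx
  have key := aux_decompose_smul_homog_left 𝒜 ℳ hd m (-d + g)
  rw [add_neg_cancel_left] at key
  rw [key]
  exact Submodule.smul_mem_pointwise_smul _ _ _ trivial

lemma aux_colon_graded {Q : Submodule R M} (hQ : IsGradedSubmodule ℳ Q) :
    ∀ g : G, ∀ a ∈ Q.colon ⊤, (DirectSum.decompose 𝒜 a g : R) ∈ Q.colon ⊤ := by
  intro g a ha
  rw [Submodule.mem_colon] at ha ⊢
  intro m _
  refine DirectSum.Decomposition.inductionOn ℳ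
    (motive := fun m => (DirectSum.decompose 𝒜 a g : R) • m ∈ Q) (by simp) ?_ ?_ m
  · intro j m'
    rw [← aux_decompose_smul_homog 𝒜 ℳ m'.2 a g]
    exact hQ _ (ha _ trivial)
  · intro x y hx hy
    rw [smul_add]; exact Q.add_mem hx hy

lemma aux_colon_mono {N N' : Submodule R M} (h : N ≤ N') : N.colon ⊤ ≤ N'.colon ⊤ :=
  fun _a ha => Submodule.mem_colon.2 fun m hm => h (Submodule.mem_colon.1 ha m hm)

lemma aux_gradedRadical_span_smul_le {s : R} {Q' : Submodule R M} {t : ℕ} (ht : 0 < t)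
    (hst : s ^ t ∈ Q'.colon ⊤) :
    gradedRadical 𝒜 ((Ideal.span {s} • (⊤ : Submodule R M)).colon ⊤)
      ⊆ gradedRadical 𝒜 (Q'.colon ⊤) := by
  intro a ha g
  obtain ⟨n, hn, h⟩ := ha g
  set c := (DirectSum.decompose 𝒜 a g : R) with hc
  have key : ∀ j : ℕ, ∀ m : M, ∃ m', c ^ (n * j) • m = s ^ j • m' := by
    intro j
    induction j with
    | zero => exact fun m => ⟨m, by simp⟩
    | succ j ih =>
      intro m
      have h1 : c ^ n • m ∈ Ideal.span {s} • (⊤ : Submodule R M) :=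
        Submodule.mem_colon.1 h m trivial
      rw [Submodule.ideal_span_singleton_smul] at h1
      obtain ⟨m₁, -, hm₁⟩ : ∃ m₁ ∈ (⊤ : Submodule R M), s • m₁ = c ^ n • m := by
        rw [← SetLike.mem_coe, Submodule.coe_pointwise_smul] at h1
        simpa [Set.mem_smul_set] using h1
      obtain ⟨m₂, hm₂⟩ := ih m₁
      refine ⟨m₂, ?_⟩
      calc c ^ (n * (j + 1)) • m = c ^ (n * j) • (c ^ n • m) := by
            rw [← mul_smul, ← pow_add, Nat.mul_succ]
        _ = c ^ (n * j) • (s • m₁) := by rw [← hm₁]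
        _ = s • (c ^ (n * j) • m₁) := smul_comm _ _ _
        _ = s • (s ^ j • m₂) := by rw [hm₂]
        _ = s ^ (j + 1) • m₂ := by rw [← mul_smul, ← pow_succ']
  refine ⟨n * t, Nat.mul_pos hn ht, Submodule.mem_colon.2 fun m _ => ?_⟩
  obtain ⟨m', hm'⟩ := key t m
  rw [hm']
  exact Submodule.mem_colon.1 hst m' trivial

lemma aux_exists_graded_prime (I : Ideal R)
    (hIg : ∀ g : G, ∀ x ∈ I, (DirectSum.decompose 𝒜 x g : R) ∈ I)
    {b : R} (hdis : ∀ n : ℕ, 0 < n → b ^ n ∉ I) :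
    ∃ p : Ideal R, IsGradedPrimeIdeal 𝒜 p ∧ I ≤ p ∧ ∀ n : ℕ, 0 < n → b ^ n ∉ p := by
  set 𝒮 : Set (Ideal R) :=
    {J | (∀ g : G, ∀ x ∈ J, (DirectSum.decompose 𝒜 x g : R) ∈ J) ∧ I ≤ J ∧
      ∀ n : ℕ, 0 < n → b ^ n ∉ J} with h𝒮
  have hzorn : ∀ c ⊆ 𝒮, IsChain (· ≤ ·) c → ∀ y ∈ c, ∃ ub ∈ 𝒮, ∀ z ∈ c, z ≤ ub := by
    intro c hc hchain y hy
    haveI : Nonempty c := ⟨⟨y, hy⟩⟩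
    have hdir : Directed (· ≤ ·) (fun J : c => (J : Ideal R)) :=
      hchain.directedOn.directed_val
    have hmemiff : ∀ x : R, x ∈ (⨆ J : c, (J : Ideal R)) ↔ ∃ J : c, x ∈ (J : Ideal R) :=
      fun x => Submodule.mem_iSup_of_directed _ hdir
    refine ⟨⨆ J : c, (J : Ideal R), ⟨?_, ?_, ?_⟩,
      fun J hJ => le_iSup (fun J : c => (J : Ideal R)) ⟨J, hJ⟩⟩
    · intro g x hx
      obtain ⟨J, hxJ⟩ := (hmemiff x).1 hx
      exact (hmemiff _).2 ⟨J, (hc J.2).1 g x hxJ⟩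
    · exact le_trans (hc hy).2.1 (le_iSup (fun J : c => (J : Ideal R)) ⟨y, hy⟩)
    · intro n hn hmem
      obtain ⟨J, hJ⟩ := (hmemiff _).1 hmem
      exact (hc J.2).2.2 n hn hJ
  obtain ⟨p, hIp, hp⟩ := zorn_le_nonempty₀ 𝒮 hzorn I ⟨hIg, le_rfl, hdis⟩
  obtain ⟨hpg, hpI, hpb⟩ := hp.1
  refine ⟨p, ⟨?_, hpg, ?_⟩, hpI, hpb⟩
  · intro htop
    exact hpb 1 one_pos (by rw [htop]; trivial)
  · intro r s hr hs hrs
    by_contra hcon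
    push_neg at hcon
    obtain ⟨hrp, hsp⟩ := hcon
    have hgradedJ : ∀ (x : R), SetLike.IsHomogeneousElem 𝒜 x →
        ∀ g : G, ∀ z ∈ p ⊔ Ideal.span {x},
          (DirectSum.decompose 𝒜 z g : R) ∈ p ⊔ Ideal.span {x} := by
      rintro x ⟨dx, hdx⟩ g z hz
      rw [Submodule.mem_sup] at hz ⊢
      obtain ⟨y, hy, w, hw, rfl⟩ := hz
      obtain ⟨cw, hcw⟩ := Ideal.mem_span_singleton'.1 hw
      refine ⟨(DirectSum.decompose 𝒜 y g : R), hpg g y hy,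
        (DirectSum.decompose 𝒜 (y + w) g : R) - (DirectSum.decompose 𝒜 y g : R), ?_, by ring⟩
      have hdec : (DirectSum.decompose 𝒜 (y + w) g : R)
          = (DirectSum.decompose 𝒜 y g : R) + (DirectSum.decompose 𝒜 w g : R) := by
        rw [DirectSum.decompose_add]; simp
      rw [hdec, add_sub_cancel_left]
      have hw' : (DirectSum.decompose 𝒜 w g : R)
          = (DirectSum.decompose 𝒜 cw (g - dx) : R) * x := by
        conv_lhs => rw [← hcw, ← sub_add_cancel g dx]
        exact aux_decompose_mul_homog 𝒜 hdx cw (g - dx)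
      rw [hw']
      exact Ideal.mem_span_singleton'.2 ⟨_, rfl⟩
    have hnot : ∀ (x : R), SetLike.IsHomogeneousElem 𝒜 x → x ∉ p →
        ∃ k : ℕ, 0 < k ∧ b ^ k ∈ p ⊔ Ideal.span {x} := by
      intro x hx hxp
      have hns : p ⊔ Ideal.span {x} ∉ 𝒮 := by
        intro hmem
        exact hxp (hp.2 hmem le_sup_left
          (Submodule.mem_sup_right (Ideal.mem_span_singleton_self x)))
      have hforall : ¬ ∀ n : ℕ, 0 < n → b ^ n ∉ p ⊔ Ideal.span {x} := by
        intro hd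
        exact hns ⟨hgradedJ x hx, le_trans hpI le_sup_left, hd⟩
      push_neg at hforall
      obtain ⟨k, hk, hbk⟩ := hforall
      exact ⟨k, hk, hbk⟩
    obtain ⟨k, hk, hbk⟩ := hnot r hr hrp
    obtain ⟨l, hl, hbl⟩ := hnot s hs hsp
    obtain ⟨y₁, hy₁, z₁, hz₁, hb1⟩ := Submodule.mem_sup.1 hbk
    obtain ⟨y₂, hy₂, z₂, hz₂, hb2⟩ := Submodule.mem_sup.1 hbl
    obtain ⟨c₁, hc₁⟩ := Ideal.mem_span_singleton'.1 hz₁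
    obtain ⟨c₂, hc₂⟩ := Ideal.mem_span_singleton'.1 hz₂
    have hbkl : b ^ (k + l) ∈ p := by
      have heq : b ^ (k + l)
          = y₁ * (y₂ + c₂ * s) + ((c₁ * r) * y₂ + (c₁ * c₂) * (r * s)) := by
        rw [pow_add, ← hb1, ← hb2, ← hc₁, ← hc₂]; ring
      rw [heq]
      exact p.add_mem (p.mul_mem_right _ hy₁)
        (p.add_mem (p.mul_mem_left _ hy₂) (p.mul_mem_left _ hrs))
    exact hpb (k + l) (by positivity) hbkl
lemma aux_gradedRadical_colon_prime {Q : Submodule R M} (hQ : Q ∈ qpSpec 𝒜 ℳ)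
    {a b : R} (ha : SetLike.IsHomogeneousElem 𝒜 a) (hb : SetLike.IsHomogeneousElem 𝒜 b)
    (hab : a * b ∈ gradedRadical 𝒜 (Q.colon ⊤)) :
    a ∈ gradedRadical 𝒜 (Q.colon ⊤) ∨ b ∈ gradedRadical 𝒜 (Q.colon ⊤) := by
  obtain ⟨⟨hQtop, hQgr, hQqp⟩, hQpf⟩ := hQ
  obtain ⟨da, hda⟩ := ha
  obtain ⟨db, hdb⟩ := hb
  obtain ⟨n, hn, habn⟩ := aux_exists_pow_of_hom_mem 𝒜 (SetLike.mul_mem_graded hda hdb) hab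
  by_cases haG : a ∈ gradedRadical 𝒜 (Q.colon ⊤)
  · exact Or.inl haG
  right
  have hbm : ∀ m : M, SetLike.IsHomogeneousElem ℳ m →
      b ^ n • m ∈ gradedRadicalSubmodule 𝒜 ℳ Q := by
    rintro m ⟨j, hj⟩
    have h1 : (a ^ n) • (b ^ n • m) ∈ Q := by
      have h2 : (a * b) ^ n • m ∈ Q := Submodule.mem_colon.1 habn m trivial
      rwa [mul_pow, mul_smul] at h2
    rcases hQqp ⟨n • da, SetLike.pow_mem_graded n hda⟩
        ⟨_, SetLike.GradedSMul.smul_mem (SetLike.pow_mem_graded n hdb) hj⟩ h1 with h | h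
    · exfalso
      apply haG
      obtain ⟨k, hk, hk'⟩ := aux_exists_pow_of_hom_mem 𝒜 (SetLike.pow_mem_graded n hda) h
      rw [← pow_mul] at hk'
      exact aux_hom_mem_gradedRadical 𝒜 hda (Nat.mul_pos hn hk) hk'
    · exact h
  have hbM : b ^ n ∈ (gradedRadicalSubmodule 𝒜 ℳ Q).colon ⊤ := by
    refine Submodule.mem_colon.2 fun m _ => ?_
    refine DirectSum.Decomposition.inductionOn ℳ
      (motive := fun m => b ^ n • m ∈ gradedRadicalSubmodule 𝒜 ℳ Q) (by simp) ?_ ?_ m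
    · intro j m'
      exact hbm _ (SetLike.isHomogeneousElem_coe m')
    · intro x y hx hy
      rw [smul_add]; exact Submodule.add_mem _ hx hy
  by_contra hbG
  have hpow : ∀ k : ℕ, 0 < k → b ^ k ∉ Q.colon ⊤ :=
    fun k hk hcon => hbG (aux_hom_mem_gradedRadical 𝒜 hdb hk hcon)
  obtain ⟨p, hpprime, hIp, hpb⟩ :=
    aux_exists_graded_prime 𝒜 (Q.colon ⊤) (aux_colon_graded 𝒜 ℳ hQgr) hpow
  obtain ⟨P, hPprime, hQP, hPp⟩ := hQpf p hpprime hIp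
  have hGrP : gradedRadicalSubmodule 𝒜 ℳ Q ≤ P := sInf_le ⟨hPprime, hQP⟩
  exact hpb n hn (hPp ▸ (aux_colon_mono hGrP hbM))

lemma aux_mem_GX_iff {s : R} (hs : SetLike.IsHomogeneousElem 𝒜 s) (Q' : qpSpec 𝒜 ℳ) :
    Q' ∈ (qpV 𝒜 ℳ (Ideal.span {s} • (⊤ : Submodule R M)))ᶜ
      ↔ s ∉ gradedRadical 𝒜 ((Q' : Submodule R M).colon ⊤) := by
  obtain ⟨i, hi⟩ := hs
  constructor
  · intro hQ hmem
    obtain ⟨t, ht, hst⟩ := aux_exists_pow_of_hom_mem 𝒜 hi hmem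
    exact hQ (aux_gradedRadical_span_smul_le 𝒜 ht hst)
  · intro hmem hsub
    refine hmem (hsub (aux_hom_mem_gradedRadical 𝒜 hi one_pos ?_))
    rw [pow_one]
    refine Submodule.mem_colon.2 fun m _ => ?_
    rw [Submodule.ideal_span_singleton_smul]
    exact Submodule.smul_mem_pointwise_smul m s ⊤ trivial


/-- The basic open sets `GX_r^{qp.M}` for homogeneous `r ∈ h(R)` form a base for the
quasi-Zariski topology on `qp.Spec_g(M)`. -/
theorem isTopologicalBasis_gx :
    @TopologicalSpace.IsTopologicalBasis (qpSpec 𝒜 ℳ) (qpZariski 𝒜 ℳ)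
      {U : Set (qpSpec 𝒜 ℳ) | ∃ r : R, SetLike.IsHomogeneousElem 𝒜 r ∧
        U = (qpV 𝒜 ℳ (Ideal.span {r} • (⊤ : Submodule R M)))ᶜ} := by
  refine @TopologicalSpace.isTopologicalBasis_of_isOpen_of_nhds _ (qpZariski 𝒜 ℳ) _ ?_ ?_
  · rintro u ⟨r, hr, rfl⟩
    exact TopologicalSpace.isOpen_generateFrom_of_mem ⟨_, aux_span_smul_graded 𝒜 ℳ hr, rfl⟩
  · intro Q u hQu hu
    have hu' : TopologicalSpace.GenerateOpen
        {U : Set (qpSpec 𝒜 ℳ) | ∃ K : Submodule R M, IsGradedSubmodule ℳ K ∧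
          U = (qpV 𝒜 ℳ K)ᶜ} u := hu
    clear hu
    revert hQu
    induction hu' with
    | @basic U hU =>
      intro hQu
      obtain ⟨K, hK, rfl⟩ := hU
      obtain ⟨x, hxK, hxQ⟩ := Set.not_subset.1 hQu
      simp only [gradedRadical, Set.mem_setOf_eq] at hxQ
      push_neg at hxQ
      obtain ⟨g, hg⟩ := hxQ
      set s := (DirectSum.decompose 𝒜 x g : R) with hsdef
      have hs : s ∈ 𝒜 g := SetLike.coe_mem _
      have hsQ : s ∉ gradedRadical 𝒜 ((Q : Submodule R M).colon ⊤) := by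
        intro hmem
        obtain ⟨n, hn, h⟩ := aux_exists_pow_of_hom_mem 𝒜 hs hmem
        exact hg n hn h
      obtain ⟨n, hn, hsK⟩ := hxK g
      refine ⟨(qpV 𝒜 ℳ (Ideal.span {s} • (⊤ : Submodule R M)))ᶜ, ⟨s, ⟨g, hs⟩, rfl⟩,
        (aux_mem_GX_iff 𝒜 ℳ ⟨g, hs⟩ Q).2 hsQ, ?_⟩
      intro Q' hQ'
      intro hsub
      exact (aux_mem_GX_iff 𝒜 ℳ ⟨g, hs⟩ Q').1 hQ'
        (hsub (aux_hom_mem_gradedRadical 𝒜 hs hn hsK))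
    | univ =>
      intro _
      refine ⟨(qpV 𝒜 ℳ (Ideal.span {(1 : R)} • (⊤ : Submodule R M)))ᶜ,
        ⟨1, SetLike.isHomogeneousElem_one 𝒜, rfl⟩, ?_, fun _ _ => trivial⟩
      refine (aux_mem_GX_iff 𝒜 ℳ (SetLike.isHomogeneousElem_one 𝒜) Q).2 ?_
      intro h
      obtain ⟨n, hn, h'⟩ := aux_exists_pow_of_hom_mem 𝒜 (SetLike.one_mem_graded 𝒜) h
      rw [one_pow] at h'
      have htop : (Q : Submodule R M) = ⊤ :=
        eq_top_iff.2 fun m _ => by simpa using Submodule.mem_colon.1 h' m trivial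
      exact Q.2.1.1 htop
    | inter U V hU hV ihU ihV =>
      intro hQ
      obtain ⟨u₁, hu₁, hQ1, hsub1⟩ := ihU hQ.1
      obtain ⟨u₂, hu₂, hQ2, hsub2⟩ := ihV hQ.2
      obtain ⟨r₁, hr₁, rfl⟩ := hu₁
      obtain ⟨r₂, hr₂, rfl⟩ := hu₂
      have hmul : SetLike.IsHomogeneousElem 𝒜 (r₁ * r₂) := SetLike.IsHomogeneousElem.mul hr₁ hr₂
      have key : ∀ Q' : qpSpec 𝒜 ℳ,
          r₁ * r₂ ∉ gradedRadical 𝒜 ((Q' : Submodule R M).colon ⊤) →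
          (r₁ ∉ gradedRadical 𝒜 ((Q' : Submodule R M).colon ⊤) ∧
           r₂ ∉ gradedRadical 𝒜 ((Q' : Submodule R M).colon ⊤)) := by
        intro Q' h12
        obtain ⟨d₁, hd₁⟩ := hr₁
        obtain ⟨d₂, hd₂⟩ := hr₂
        constructor
        · intro h1
          obtain ⟨t, ht, h'⟩ := aux_exists_pow_of_hom_mem 𝒜 hd₁ h1
          exact h12 (aux_hom_mem_gradedRadical 𝒜 (SetLike.mul_mem_graded hd₁ hd₂) ht
            (by rw [mul_pow]; exact Ideal.mul_mem_right _ _ h'))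
        · intro h2
          obtain ⟨t, ht, h'⟩ := aux_exists_pow_of_hom_mem 𝒜 hd₂ h2
          exact h12 (aux_hom_mem_gradedRadical 𝒜 (SetLike.mul_mem_graded hd₁ hd₂) ht
            (by rw [mul_pow]; exact Ideal.mul_mem_left _ _ h'))
      refine ⟨(qpV 𝒜 ℳ (Ideal.span {r₁ * r₂} • (⊤ : Submodule R M)))ᶜ,
        ⟨r₁ * r₂, hmul, rfl⟩, ?_, ?_⟩
      · refine (aux_mem_GX_iff 𝒜 ℳ hmul Q).2 ?_
        intro h
        rcases aux_gradedRadical_colon_prime 𝒜 ℳ Q.2 hr₁ hr₂ h with h' | h'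
        · exact (aux_mem_GX_iff 𝒜 ℳ hr₁ Q).1 hQ1 h'
        · exact (aux_mem_GX_iff 𝒜 ℳ hr₂ Q).1 hQ2 h'
      · intro Q' hQ'
        have h12 := (aux_mem_GX_iff 𝒜 ℳ hmul Q').1 hQ'
        obtain ⟨h1, h2⟩ := key Q' h12
        exact ⟨hsub1 ((aux_mem_GX_iff 𝒜 ℳ hr₁ Q').2 h1),
          hsub2 ((aux_mem_GX_iff 𝒜 ℳ hr₂ Q').2 h2)⟩
    | sUnion S hS ih =>
      intro hQ
      obtain ⟨t, htS, hQt⟩ := hQ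
      obtain ⟨v, hv, hQv, hsub⟩ := ih t htS hQt
      exact ⟨v, hv, hQv, hsub.trans (Set.subset_sUnion_of_mem htS)⟩

end ModuleDefs
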